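/- Let k be a field, n ≥ 1, L ⊆ ℤⁿ a subgroup, p ∈ ℝⁿ, and σ₁, σ₂ ⊆ {1,…,n}. Assume: (H1) there exists u₁ ∈ L with (u₁)_i = ⌊p⌋_i for all i ∈ σ₁ ∩ σ₂; (H2) there exists u₂ ∈ L with (u₂)_i = 0 for all i ∈ σ₁ ∩ σ₂, (u₂)_i > 0 for all i ∈ σ₁ ∖ σ₂, and (u₂)_i < 0 for all i ∈ σ₂ ∖ σ₁. Then there exist u ∈ L, k₀ ∈ ℕ, and α, β ∈ ℕⁿ such that (x^σ̂₁ y^σ̂₂)^{k₀} · m_p = x^α y^β · x^u y^{−u} in T; equivalently, k₀·(𝟙_{σ₁ᶜ}, 𝟙_{σ₂ᶜ}) + (⌊p⌋ − u, −⌊p⌋ + u) ∈ ℕ^{2n}. (In the paper, hypothesis (H1) follows from smoothness of the toric fan Σ with ray sets σ₁, σ₂ of maximal cones, and (H2) follows from the Separation Lemma for convex polyhedral cones.) -/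
import Mathlib


/-!
STATEMENT 1 (Lemma 3 of the paper): under a smoothness-type hypothesis (H1) and a
separation hypothesis (H2), some power of `x^σ̂₁ y^σ̂₂` times the monomial label `m_p`
equals `x^α y^β · x^u y^{-u}` in the Laurent ring `T`.
-/

noncomputable section

open MvPolynomial

/-- The Laurent polynomial ring `T` in `x₁,…,xₙ,y₁,…,yₙ` over `k`. -/
abbrev LaurentT (k : Type*) [Field k] (n : ℕ) :=
  AddMonoidAlgebra k ((Fin n → ℤ) × (Fin n → ℤ))

/-- The polynomial ring `S = k[x₁,…,xₙ,y₁,…,yₙ]`; `Sum.inl i ↦ xᵢ`, `Sum.inr i ↦ yᵢ`. -/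
abbrev PolyS (k : Type*) [Field k] (n : ℕ) := MvPolynomial (Fin n ⊕ Fin n) k

/-- The natural inclusion `S → T`. -/
def incl (k : Type*) [Field k] (n : ℕ) : PolyS k n →+* LaurentT k n :=
  MvPolynomial.eval₂Hom (algebraMap k (LaurentT k n))
    (Sum.elim
      (fun i => AddMonoidAlgebra.single (Pi.single i 1, 0) (1 : k))
      (fun i => AddMonoidAlgebra.single (0, Pi.single i 1) (1 : k)))

/-- The monomial label `m_p = x^{⌊p⌋} y^{-⌊p⌋} ∈ T` of a point `p ∈ ℝⁿ`. -/
def monLabel (k : Type*) [Field k] (n : ℕ) (p : Fin n → ℝ) : LaurentT k n :=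
  AddMonoidAlgebra.single ((fun i => ⌊p i⌋), fun i => -⌊p i⌋) (1 : k)

/-- `x^σ̂ = ∏_{i ∉ σ} xᵢ ∈ S`. -/
def xhat (k : Type*) [Field k] (n : ℕ) (σ : Finset (Fin n)) : PolyS k n :=
  ∏ i ∈ σᶜ, X (Sum.inl i)

/-- `y^σ̂ = ∏_{i ∉ σ} yᵢ ∈ S`. -/
def yhat (k : Type*) [Field k] (n : ℕ) (σ : Finset (Fin n)) : PolyS k n :=
  ∏ i ∈ σᶜ, X (Sum.inr i)

/-- Assuming (H1): some `u₁ ∈ L` agrees with `⌊p⌋` on `σ₁ ∩ σ₂`, and (H2): some `u₂ ∈ L`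
vanishes on `σ₁ ∩ σ₂`, is positive on `σ₁ ∖ σ₂` and negative on `σ₂ ∖ σ₁`, there exist
`u ∈ L`, `k₀ ∈ ℕ` and `α, β ∈ ℕⁿ` with
`(x^σ̂₁ y^σ̂₂)^{k₀} · m_p = x^α y^β · x^u y^{-u}` in `T`. -/
lemma incl_xhat (k : Type*) [Field k] (n : ℕ) (σ : Finset (Fin n)) :
    incl k n (xhat k n σ) =
      AddMonoidAlgebra.single ((fun i => if i ∈ σ then 0 else 1), 0) (1 : k) := by
  rw [xhat, map_prod]
  simp only [incl, coe_eval₂Hom, eval₂_X, Sum.elim_inl]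
  rw [AddMonoidAlgebra.prod_single]
  congr 1
  · ext i
    · simp [Prod.fst_sum, Finset.sum_apply, Pi.single_apply, Finset.sum_ite_eq']
    · simp [Prod.snd_sum]
  · simp

lemma incl_yhat (k : Type*) [Field k] (n : ℕ) (σ : Finset (Fin n)) :
    incl k n (yhat k n σ) =
      AddMonoidAlgebra.single (0, (fun i => if i ∈ σ then 0 else 1)) (1 : k) := by
  rw [yhat, map_prod]
  simp only [incl, coe_eval₂Hom, eval₂_X, Sum.elim_inr]
  rw [AddMonoidAlgebra.prod_single]
  congr 1
  · ext i
    · simp [Prod.fst_sum]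
    · simp [Prod.snd_sum, Finset.sum_apply, Pi.single_apply, Finset.sum_ite_eq']
  · simp

theorem clear_denominators (k : Type*) [Field k] (n : ℕ) (hn : 1 ≤ n)
    (L : AddSubgroup (Fin n → ℤ)) (p : Fin n → ℝ) (σ₁ σ₂ : Finset (Fin n))
    (H1 : ∃ u₁ ∈ L, ∀ i ∈ σ₁ ∩ σ₂, u₁ i = ⌊p i⌋)
    (H2 : ∃ u₂ ∈ L, (∀ i ∈ σ₁ ∩ σ₂, u₂ i = 0) ∧ (∀ i ∈ σ₁ \ σ₂, 0 < u₂ i) ∧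
      (∀ i ∈ σ₂ \ σ₁, u₂ i < 0)) :
    ∃ u ∈ L, ∃ (k₀ : ℕ) (α β : Fin n → ℕ),
      incl k n ((xhat k n σ₁ * yhat k n σ₂) ^ k₀) * monLabel k n p
        = AddMonoidAlgebra.single ((fun i => (α i : ℤ)), fun i => (β i : ℤ)) (1 : k)
            * AddMonoidAlgebra.single (u, -u) (1 : k) := by
  obtain ⟨u₁, hu₁L, hu₁⟩ := H1
  obtain ⟨u₂, hu₂L, h0, hpos, hneg⟩ := H2
  set f : Fin n → ℤ := fun i => ⌊p i⌋ with hf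
  set m : ℤ := ∑ i, |u₁ i - f i| with hmdef
  have hm : ∀ i, |u₁ i - f i| ≤ m := by
    intro i; rw [hmdef]
    exact Finset.single_le_sum (f := fun j => |u₁ j - f j|) (fun j _ => abs_nonneg _)
      (Finset.mem_univ i)
  have hm0 : (0 : ℤ) ≤ m := by
    rw [hmdef]; exact Finset.sum_nonneg fun j _ => abs_nonneg _
  set u : Fin n → ℤ := u₁ - m • u₂ with hudef
  have huL : u ∈ L := L.sub_mem hu₁L (L.zsmul_mem hu₂L m)
  have hui : ∀ i, u i = u₁ i - m * u₂ i := fun i => rfl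
  set K : ℤ := ∑ i, |f i - u i| with hKdef
  have hK : ∀ i, |f i - u i| ≤ K := by
    intro i; rw [hKdef]
    exact Finset.single_le_sum (f := fun j => |f j - u j|) (fun j _ => abs_nonneg _)
      (Finset.mem_univ i)
  have hK0 : (0 : ℤ) ≤ K := by
    rw [hKdef]; exact Finset.sum_nonneg fun j _ => abs_nonneg _
  set k₀ : ℕ := K.toNat with hk₀def
  have hk₀ : (k₀ : ℤ) = K := Int.toNat_of_nonneg hK0
  set e₁ : Fin n → ℤ := fun i => if i ∈ σ₁ then 0 else 1 with he₁
  set e₂ : Fin n → ℤ := fun i => if i ∈ σ₂ then 0 else 1 with he₂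
  -- key coordinate inequalities
  have hkey₁ : ∀ i, i ∈ σ₁ → f i - u i ≥ 0 := by
    intro i hi
    by_cases hi2 : i ∈ σ₂
    · have h1 := hu₁ i (Finset.mem_inter.mpr ⟨hi, hi2⟩)
      have h2 := h0 i (Finset.mem_inter.mpr ⟨hi, hi2⟩)
      rw [hui]; rw [h2]; simp [h1, hf]
    · have h2 := hpos i (Finset.mem_sdiff.mpr ⟨hi, hi2⟩)
      have h3 := hm i
      have h4 : u₁ i - f i ≤ |u₁ i - f i| := le_abs_self _
      have h5 : 1 ≤ u₂ i := h2
      rw [hui]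
      nlinarith [mul_le_mul_of_nonneg_left h5 hm0]
  have hkey₂ : ∀ i, i ∈ σ₂ → u i - f i ≥ 0 := by
    intro i hi
    by_cases hi1 : i ∈ σ₁
    · have h1 := hu₁ i (Finset.mem_inter.mpr ⟨hi1, hi⟩)
      have h2 := h0 i (Finset.mem_inter.mpr ⟨hi1, hi⟩)
      rw [hui, h2]; simp [h1, hf]
    · have h2 := hneg i (Finset.mem_sdiff.mpr ⟨hi, hi1⟩)
      have h3 := hm i
      have h4 : -(u₁ i - f i) ≤ |u₁ i - f i| := neg_le_abs _
      have h5 : u₂ i ≤ -1 := by omega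
      rw [hui]
      nlinarith [mul_le_mul_of_nonneg_left h5 hm0]
  have hα0 : ∀ i, 0 ≤ (k₀ : ℤ) * e₁ i + f i - u i := by
    intro i
    by_cases hi : i ∈ σ₁
    · have := hkey₁ i hi; simp only [he₁, hi, if_pos]; linarith
    · have h1 := hK i
      have h2 : -(f i - u i) ≤ |f i - u i| := neg_le_abs _
      simp only [he₁, hi, if_neg, not_false_iff, mul_one, hk₀]
      linarith
  have hβ0 : ∀ i, 0 ≤ (k₀ : ℤ) * e₂ i - f i + u i := by
    intro i
    by_cases hi : i ∈ σ₂
    · have := hkey₂ i hi; simp only [he₂, hi, if_pos]; linarith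
    · have h1 := hK i
      have h2 : f i - u i ≤ |f i - u i| := le_abs_self _
      simp only [he₂, hi, if_neg, not_false_iff, mul_one, hk₀]
      linarith
  set α : Fin n → ℕ := fun i => ((k₀ : ℤ) * e₁ i + f i - u i).toNat with hαdef
  set β : Fin n → ℕ := fun i => ((k₀ : ℤ) * e₂ i - f i + u i).toNat with hβdef
  have hα : ∀ i, (α i : ℤ) = (k₀ : ℤ) * e₁ i + f i - u i := fun i =>
    Int.toNat_of_nonneg (hα0 i)
  have hβ : ∀ i, (β i : ℤ) = (k₀ : ℤ) * e₂ i - f i + u i := fun i =>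
    Int.toNat_of_nonneg (hβ0 i)
  refine ⟨u, huL, k₀, α, β, ?_⟩
  rw [map_pow, map_mul, incl_xhat, incl_yhat, AddMonoidAlgebra.single_mul_single,
    AddMonoidAlgebra.single_pow, monLabel, AddMonoidAlgebra.single_mul_single,
    AddMonoidAlgebra.single_mul_single]
  congr 1
  · ext i
    · have h := hα i
      simp only [he₁, hf] at h
      simp only [Prod.mk_add_mk, Prod.smul_mk, Pi.add_apply, Pi.smul_apply, Pi.zero_apply,
        Pi.neg_apply, smul_zero, add_zero, zero_add, smul_eq_mul, nsmul_eq_mul, Pi.mul_apply,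
        Pi.natCast_apply]
      linarith [h]
    · have h := hβ i
      simp only [he₂, hf] at h
      simp only [Prod.mk_add_mk, Prod.smul_mk, Pi.add_apply, Pi.smul_apply, Pi.zero_apply,
        Pi.neg_apply, smul_zero, add_zero, zero_add, smul_eq_mul, nsmul_eq_mul, Pi.mul_apply,
        Pi.natCast_apply]
      linarith [h]
  · simp

end
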